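/- For all real numbers a > 0, b > 0 and λ ∈ ℝ, the integral over s ∈ (0, ∞) of s^(λ−1) · exp(−(a·s + b/s)/2) with respect to s equals 2 · (b/a)^(λ/2) · K_λ(√(a·b)). In particular, the GIG(λ, a, b) density integrates to 1 over (0, ∞). -/

import Mathlib

open MeasureTheory Real

/-- The modified Bessel function of the second kind of order `ν`, for `z > 0`. -/
noncomputable def besselK (ν z : ℝ) : ℝ :=
  ∫ t in Set.Ioi (0 : ℝ), Real.exp (-z * Real.cosh t) * Real.cosh (ν * t)

lemma integrable_exp_neg_abs' : Integrable (fun t : ℝ => Real.exp (-|t|)) := by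
  have h1 : IntegrableOn (fun t : ℝ => Real.exp (-|t|)) (Set.Ioi 0) := by
    refine ((exp_neg_integrableOn_Ioi 0 (one_pos)).congr_fun ?_ measurableSet_Ioi)
    intro x hx
    simp [abs_of_pos (show (0:ℝ) < x from hx)]
  have h2 : IntegrableOn (fun t : ℝ => Real.exp (-|t|)) (Set.Iic 0) := by
    rw [← Measure.map_neg_eq_self (volume : Measure ℝ)]
    have m : MeasurableEmbedding fun x : ℝ => -x := (Homeomorph.neg ℝ).measurableEmbedding
    rw [m.integrableOn_map_iff]
    simp_rw [Function.comp_def, abs_neg, Set.neg_preimage, Set.neg_Iic, neg_zero]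
    exact Iff.mpr integrableOn_Ici_iff_integrableOn_Ioi h1
  rw [← integrableOn_univ, ← Set.Iic_union_Ioi (a := (0:ℝ))]
  exact integrableOn_union.mpr ⟨h2, h1⟩

lemma integrable_exp_sub_cosh (l z : ℝ) (hz : 0 < z) :
    Integrable (fun t : ℝ => Real.exp (l * t - z * Real.cosh t)) := by
  refine Integrable.mono' (g := fun t => Real.exp (2*(|l|+1)^2/z) * Real.exp (-|t|))
    (integrable_exp_neg_abs'.const_mul _) ?_ ?_
  · exact (Real.continuous_exp.comp ((continuous_const.mul continuous_id).sub
      (continuous_const.mul Real.continuous_cosh))).aestronglyMeasurable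
  · refine Filter.Eventually.of_forall fun t => ?_
    show ‖Real.exp (l * t - z * Real.cosh t)‖ ≤ Real.exp (2*(|l|+1)^2/z) * Real.exp (-|t|)
    rw [Real.norm_eq_abs, Real.abs_exp, ← Real.exp_add]
    apply Real.exp_le_exp.mpr
    have hc : Real.cosh t = (Real.exp t + Real.exp (-t))/2 := Real.cosh_eq t
    have h1 : 1 + t/2 ≤ Real.exp (t/2) := by
      have := Real.add_one_le_exp (t/2); linarith
    have h2 : 1 - t/2 ≤ Real.exp (-(t/2)) := by
      have := Real.add_one_le_exp (-(t/2)); linarith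
    have he : Real.exp t = Real.exp (t/2) * Real.exp (t/2) := by
      rw [← Real.exp_add]; ring_nf
    have he' : Real.exp (-t) = Real.exp (-(t/2)) * Real.exp (-(t/2)) := by
      rw [← Real.exp_add]; ring_nf
    have hu : 0 < Real.exp (t/2) := Real.exp_pos _
    have hv : 0 < Real.exp (-(t/2)) := Real.exp_pos _
    have hl1 : l ≤ |l| := le_abs_self l
    have hl2 : -|l| ≤ l := neg_abs_le l
    rcases le_or_gt 0 t with ht | ht
    · rw [abs_of_nonneg ht]
      have hq : (1 + t/2)^2 ≤ Real.exp t := by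
        rw [he]; nlinarith [h1, hu]
      have key : z * t^2/8 + 2*(|l|+1)^2/z ≥ (|l|+1) * t := by
        rw [ge_iff_le, ← sub_nonneg]
        have : z * t^2/8 + 2*(|l|+1)^2/z - (|l|+1)*t = (z*t - 4*(|l|+1))^2 / (8*z) := by
          field_simp; ring
        rw [this]; positivity
      nlinarith [Real.exp_pos (-t), mul_le_mul_of_nonneg_left hq hz.le]
    · rw [abs_of_neg ht]
      have hq : (1 - t/2)^2 ≤ Real.exp (-t) := by
        rw [he']; nlinarith [h2, hv]
      have key : z * t^2/8 + 2*(|l|+1)^2/z ≥ (|l|+1) * (-t) := by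
        rw [ge_iff_le, ← sub_nonneg]
        have : z * t^2/8 + 2*(|l|+1)^2/z - (|l|+1)*(-t) = (z*t + 4*(|l|+1))^2 / (8*z) := by
          field_simp; ring
        rw [this]; positivity
      nlinarith [Real.exp_pos t, mul_le_mul_of_nonneg_left hq hz.le]

lemma integrand_sum (l z t : ℝ) :
    Real.exp (-l * t - z * Real.cosh t) + Real.exp (l * t - z * Real.cosh t)
      = 2 * (Real.exp (-z * Real.cosh t) * Real.cosh (l * t)) := by
  rw [Real.cosh_eq (l*t), sub_eq_add_neg, sub_eq_add_neg, Real.exp_add, Real.exp_add, neg_mul z,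
    neg_mul l]
  ring

lemma besselK_integrableOn (l z : ℝ) (hz : 0 < z) :
    IntegrableOn (fun t => Real.exp (-z * Real.cosh t) * Real.cosh (l * t)) (Set.Ioi 0) := by
  have h := ((integrable_exp_sub_cosh (-l) z hz).integrableOn (s := Set.Ioi 0)).add
    ((integrable_exp_sub_cosh l z hz).integrableOn (s := Set.Ioi 0))
  have h2 := h.const_mul (2⁻¹ : ℝ)
  refine IntegrableOn.congr_fun h2 (fun t _ => ?_) measurableSet_Ioi
  show 2⁻¹ * (Real.exp (-l * t - z * Real.cosh t) + Real.exp (l * t - z * Real.cosh t)) = _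
  rw [integrand_sum l z t]; ring

lemma besselK_pos (l z : ℝ) (hz : 0 < z) : 0 < besselK l z := by
  rw [besselK]
  rw [setIntegral_pos_iff_support_of_nonneg_ae ?_ (besselK_integrableOn l z hz)]
  · have hsupp : Function.support (fun t => Real.exp (-z * Real.cosh t) * Real.cosh (l * t))
        = Set.univ :=
      Set.eq_univ_of_forall fun t => (mul_pos (Real.exp_pos _) (Real.cosh_pos _)).ne'
    rw [hsupp, Set.univ_inter, Real.volume_Ioi]
    exact ENNReal.zero_lt_top
  · exact Filter.Eventually.of_forall fun t => (mul_pos (Real.exp_pos _) (Real.cosh_pos _)).le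

lemma integral_exp_sub_cosh (l z : ℝ) (hz : 0 < z) :
    ∫ t : ℝ, Real.exp (l * t - z * Real.cosh t) = 2 * besselK l z := by
  have hIl := integrable_exp_sub_cosh l z hz
  have hInl := integrable_exp_sub_cosh (-l) z hz
  rw [← intervalIntegral.integral_Iic_add_Ioi (b := 0) hIl.integrableOn hIl.integrableOn]
  have h3 : (∫ x in Set.Iic (0:ℝ), Real.exp (l * x - z * Real.cosh x))
      = ∫ x in Set.Ioi (0:ℝ), Real.exp (-l * x - z * Real.cosh x) := by
    have h := integral_comp_neg_Ioi (0:ℝ) (fun x => Real.exp (l * x - z * Real.cosh x))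
    rw [neg_zero] at h
    rw [← h]
    refine setIntegral_congr_fun measurableSet_Ioi fun x _ => ?_
    rw [Real.cosh_neg]; ring_nf
  rw [h3, ← integral_add hInl.integrableOn hIl.integrableOn]
  rw [show (2:ℝ) * besselK l z = ∫ t in Set.Ioi (0:ℝ),
      2 * (Real.exp (-z * Real.cosh t) * Real.cosh (l * t)) from by
    rw [MeasureTheory.integral_const_mul]; rfl]
  exact setIntegral_congr_fun measurableSet_Ioi fun t _ => integrand_sum l z t

/-- The GIG kernel integral identity, and normalization of the GIG(λ, a, b) density. -/
theorem gig_integral (l a b : ℝ) (ha : 0 < a) (hb : 0 < b) :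
    (∫ s in Set.Ioi (0 : ℝ), s ^ (l - 1) * Real.exp (-(a * s + b / s) / 2)
        = 2 * (b / a) ^ (l / 2) * besselK l (Real.sqrt (a * b)))
    ∧ (∫ s in Set.Ioi (0 : ℝ),
          ((a / b) ^ (l / 2) / (2 * besselK l (Real.sqrt (a * b))))
            * s ^ (l - 1) * Real.exp (-(a * s + b / s) / 2) = 1) := by
  set z := Real.sqrt (a * b) with hzdef
  set c := Real.sqrt (b / a) with hcdef
  have hzpos : 0 < z := Real.sqrt_pos.mpr (mul_pos ha hb)
  have hcpos : 0 < c := Real.sqrt_pos.mpr (div_pos hb ha)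
  have hac : a * c = z := by
    have h : a * c = Real.sqrt (a^2 * (b/a)) := by
      rw [Real.sqrt_mul (sq_nonneg a), Real.sqrt_sq ha.le, hcdef]
    rw [h, hzdef]; congr 1; field_simp
  have hbc : b / c = z := by
    have h : b / c = Real.sqrt (b^2 / (b/a)) := by
      rw [Real.sqrt_div (sq_nonneg b), Real.sqrt_sq hb.le, hcdef]
    rw [h, hzdef]; congr 1; field_simp
  have hcl : c ^ l = (b / a) ^ (l / 2) := by
    rw [hcdef, Real.sqrt_eq_rpow, ← Real.rpow_mul (div_nonneg hb.le ha.le)]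
    congr 1; ring
  have hpt : ∀ x : ℝ, |c * Real.exp x| •
      ((c * Real.exp x) ^ (l - 1) * Real.exp (-(a * (c * Real.exp x) + b / (c * Real.exp x)) / 2))
      = c ^ l * Real.exp (l * x - z * Real.cosh x) := by
    intro x
    have hpos : 0 < c * Real.exp x := mul_pos hcpos (Real.exp_pos x)
    rw [abs_of_pos hpos, smul_eq_mul, Real.rpow_def_of_pos hpos,
      Real.log_mul hcpos.ne' (Real.exp_pos x).ne', Real.log_exp]
    rw [show a * (c * Real.exp x) = z * Real.exp x from by rw [← mul_assoc, hac]]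
    rw [show b / (c * Real.exp x) = z * Real.exp (-x) from by
      rw [div_mul_eq_div_div, hbc, Real.exp_neg, div_eq_mul_inv]]
    rw [Real.cosh_eq, Real.rpow_def_of_pos hcpos]
    nth_rw 1 [show c = Real.exp (Real.log c) from (Real.exp_log hcpos).symm]
    simp only [← Real.exp_add]
    rw [Real.exp_eq_exp]
    ring
  have key1 : (∫ s in Set.Ioi (0:ℝ), s ^ (l - 1) * Real.exp (-(a * s + b / s) / 2))
      = c ^ l * (2 * besselK l z) := by
    have himg : (fun t : ℝ => c * Real.exp t) '' Set.univ = Set.Ioi 0 := by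
      rw [Set.image_univ]
      ext y
      simp only [Set.mem_range, Set.mem_Ioi]
      constructor
      · rintro ⟨t, rfl⟩; positivity
      · intro hy
        refine ⟨Real.log (y / c), ?_⟩
        rw [Real.exp_log (div_pos hy hcpos)]; field_simp
    have hinj : Set.InjOn (fun t : ℝ => c * Real.exp t) Set.univ := by
      intro x _ y _ h
      exact Real.exp_injective (mul_left_cancel₀ hcpos.ne' h)
    rw [← himg, integral_image_eq_integral_abs_deriv_smul MeasurableSet.univ
      (fun x _ => ((Real.hasDerivAt_exp x).const_mul c).hasDerivWithinAt) hinj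
      (fun s => s ^ (l - 1) * Real.exp (-(a * s + b / s) / 2))]
    rw [MeasureTheory.setIntegral_univ]
    rw [show (fun x : ℝ => |c * Real.exp x| •
        ((c * Real.exp x) ^ (l - 1) *
          Real.exp (-(a * (c * Real.exp x) + b / (c * Real.exp x)) / 2)))
      = fun x : ℝ => c ^ l * Real.exp (l * x - z * Real.cosh x) from funext hpt]
    rw [MeasureTheory.integral_const_mul, integral_exp_sub_cosh l z hzpos]
  have part1 : (∫ s in Set.Ioi (0:ℝ), s ^ (l - 1) * Real.exp (-(a * s + b / s) / 2))
      = 2 * (b / a) ^ (l / 2) * besselK l z := by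
    rw [key1, hcl]; ring
  refine ⟨part1, ?_⟩
  have hK := (besselK_pos l z hzpos).ne'
  have hprod : (a/b) ^ (l/2) * (b/a) ^ (l/2) = 1 := by
    rw [← Real.mul_rpow (div_nonneg ha.le hb.le) (div_nonneg hb.le ha.le)]
    rw [show a/b * (b/a) = 1 from by field_simp]
    exact Real.one_rpow _
  simp only [mul_assoc]
  rw [MeasureTheory.integral_const_mul]
  rw [part1]
  field_simp
  nlinarith [hprod, besselK_pos l z hzpos]
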